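/- Let (K,∂) be a differential field and u ∈ K{x_1,...,x_n}. For a differential point η of V(u), the derivation of the linearization commutes with linearization: ∂(L[u,η]) = L[∂u, η] in κ(η){y_1,...,y_n}, where L[u,η] = Σ_{i,j} (∂u/∂x_i^(j))(η) · y_i^(j). -/

import Mathlib

open MvPolynomial

lemma key_comm {n : ℕ} {K : Type*} [Field K] (dK : K → K)
    (d : MvPolynomial (Fin n × ℕ) K → MvPolynomial (Fin n × ℕ) K)
    (hdadd : ∀ p q, d (p + q) = d p + d q)
    (hdleib : ∀ p q, d (p * q) = d p * q + p * d q)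
    (hdC : ∀ k : K, d (C k) = C (dK k))
    (hdX : ∀ (i : Fin n) (j : ℕ), d (X (i, j)) = X (i, j + 1))
    (i : Fin n) (j : ℕ) (p : MvPolynomial (Fin n × ℕ) K) :
    pderiv (i, j) (d p)
      = d (pderiv (i, j) p) + (if j = 0 then 0 else pderiv (i, j - 1) p) := by
  have hd0 : d 0 = 0 := by
    have h := hdadd 0 0
    simp only [add_zero] at h
    exact (add_eq_left.mp h.symm)
  have hd1 : d 1 = 0 := by
    have h := hdleib 1 1
    simp only [mul_one, one_mul] at h
    exact (add_eq_left.mp h.symm)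
  induction p using MvPolynomial.induction_on with
  | C a =>
      by_cases hj : j = 0 <;> simp [hj, hdC, hd0]
  | add p q ihp ihq =>
      rw [hdadd, map_add, map_add, ihp, ihq]
      by_cases hj : j = 0 <;> simp [hj, hdadd] <;> ring
  | mul_X p s ih =>
      obtain ⟨s1, s2⟩ := s
      have hXs : d (X (s1, s2)) = X (s1, s2 + 1) := hdX s1 s2
      rw [hdleib, map_add, pderiv_mul, pderiv_mul, ih, hXs, pderiv_mul]
      by_cases h1 : ((i, j) : Fin n × ℕ) = (s1, s2)
      · obtain ⟨rfl, rfl⟩ := Prod.ext_iff.mp h1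
        have e1 : pderiv (i, j) (X (i, j) : MvPolynomial (Fin n × ℕ) K) = 1 :=
          pderiv_X_self _
        have e2 : pderiv (i, j) (X (i, j + 1) : MvPolynomial (Fin n × ℕ) K) = 0 :=
          pderiv_X_of_ne (by simp)
        rw [e1, e2]
        by_cases hj : j = 0
        · subst hj
          simp [hd1, hXs, hdadd, hdleib, hdX]
          ring
        · have e3 : pderiv (i, j - 1) (X (i, j) : MvPolynomial (Fin n × ℕ) K) = 0 :=
            pderiv_X_of_ne (by simp [hj]; omega)
          simp [hj, e3, hd1, hXs, hdadd, hdleib, hdX, pderiv_mul, e1]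
          ring
      · have e1 : pderiv (i, j) (X (s1, s2) : MvPolynomial (Fin n × ℕ) K) = 0 :=
          pderiv_X_of_ne (fun h => h1 h.symm)
        rw [e1]
        by_cases h2 : ((i, j) : Fin n × ℕ) = (s1, s2 + 1)
        · obtain ⟨rfl, hjs⟩ := Prod.ext_iff.mp h2
          simp only at hjs
          subst hjs
          have e2 : pderiv (i, s2 + 1) (X (i, s2 + 1) : MvPolynomial (Fin n × ℕ) K) = 1 :=
            pderiv_X_self _
          have e3 : pderiv (i, s2 + 1 - 1) (X (i, s2) : MvPolynomial (Fin n × ℕ) K) = 1 := by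
            simp
          rw [e2]
          simp [hd0, pderiv_mul, e3, e1, hdadd, hdleib, hdX]
          ring
        · have e2 : pderiv (i, j) (X (s1, s2 + 1) : MvPolynomial (Fin n × ℕ) K) = 0 :=
            pderiv_X_of_ne (fun h => h2 h.symm)
          rw [e2]
          by_cases hj : j = 0
          · subst hj
            simp [hd0, hdadd, hdleib, hdX]
          · have e3 : pderiv (i, j - 1) (X (s1, s2) : MvPolynomial (Fin n × ℕ) K) = 0 := by
              apply pderiv_X_of_ne
              intro h
              apply h2
              obtain ⟨ha, hb⟩ := Prod.ext_iff.mp h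
              simp only at ha hb
              subst ha
              have : j = s2 + 1 := by omega
              simp [this]
            simp [hj, pderiv_mul, e1, e3, hd0, hdadd, hdleib, hdX]
            ring

/-- Derivation commutes with linearization: for a differential point `η` of `V(u)`,
`∂(L[u,η]) = L[∂u,η]` in `κ(η){y₁,…,yₙ}`, where
`L[v,η] = Σ_{i,j} (∂v/∂xᵢ⁽ʲ⁾)(η) · yᵢ⁽ʲ⁾`. -/
theorem derivation_commutes_with_linearization
    (n : ℕ) (K : Type*) [Field K] (dK : K → K)
    (F : Type*) [Field F] (dF : F → F)
    (hdFadd : ∀ x y : F, dF (x + y) = dF x + dF y)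
    (hdFleib : ∀ x y : F, dF (x * y) = dF x * y + x * dF y)
    -- the derivation on K{x₁,…,xₙ}
    (d : MvPolynomial (Fin n × ℕ) K → MvPolynomial (Fin n × ℕ) K)
    (hdadd : ∀ p q, d (p + q) = d p + d q)
    (hdleib : ∀ p q, d (p * q) = d p * q + p * d q)
    (hdC : ∀ k : K, d (C k) = C (dK k))
    (hdX : ∀ (i : Fin n) (j : ℕ), d (X (i, j)) = X (i, j + 1))
    -- the derivation on κ(η){y₁,…,yₙ}, extending dF with ∂(yᵢ⁽ʲ⁾) = yᵢ⁽ʲ⁺¹⁾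
    (Dy : MvPolynomial (Fin n × ℕ) F → MvPolynomial (Fin n × ℕ) F)
    (hDyadd : ∀ p q, Dy (p + q) = Dy p + Dy q)
    (hDyleib : ∀ p q, Dy (p * q) = Dy p * q + p * Dy q)
    (hDyC : ∀ a : F, Dy (C a) = C (dF a))
    (hDyX : ∀ (i : Fin n) (j : ℕ), Dy (X (i, j)) = X (i, j + 1))
    -- a differential point of V(u)
    (η : MvPolynomial (Fin n × ℕ) K →+* F)
    (hdiff : ∀ p, η (d p) = dF (η p))
    (u : MvPolynomial (Fin n × ℕ) K) (r : ℕ)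
    (hord : ∀ (i : Fin n) (j : ℕ), r ≤ j → pderiv (i, j) u = 0)
    (hη : ∀ k : ℕ, η (d^[k] u) = 0) :
    Dy (∑ i : Fin n, ∑ j ∈ Finset.range (r + 2),
        (C (η (pderiv (i, j) u)) * X (i, j) : MvPolynomial (Fin n × ℕ) F))
      = ∑ i : Fin n, ∑ j ∈ Finset.range (r + 2),
          (C (η (pderiv (i, j) (d u))) * X (i, j) : MvPolynomial (Fin n × ℕ) F) := by
  classical
  have hη0 : (η 0 : F) = 0 := map_zero η
  -- rewrite the RHS coefficients using the commutation lemma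
  have hcoeff : ∀ (i : Fin n) (j : ℕ),
      η (pderiv (i, j) (d u))
        = dF (η (pderiv (i, j) u)) + (if j = 0 then 0 else η (pderiv (i, j - 1) u)) := by
    intro i j
    rw [key_comm dK d hdadd hdleib hdC hdX i j u, map_add, hdiff]
    by_cases hj : j = 0 <;> simp [hj]
  -- Dy as an additive monoid hom
  have hDy0 : Dy 0 = 0 := by
    have h := hDyadd 0 0
    simp only [add_zero] at h
    exact (add_eq_left.mp h.symm)
  have hDysum : ∀ (s : Finset (Fin n)) (f : Fin n → MvPolynomial (Fin n × ℕ) F),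
      Dy (∑ x ∈ s, f x) = ∑ x ∈ s, Dy (f x) := by
    intro s f
    induction s using Finset.induction_on with
    | empty => simpa using hDy0
    | insert a s hx ih => rw [Finset.sum_insert hx, hDyadd, ih, Finset.sum_insert hx]
  have hDysum' : ∀ (s : Finset ℕ) (f : ℕ → MvPolynomial (Fin n × ℕ) F),
      Dy (∑ x ∈ s, f x) = ∑ x ∈ s, Dy (f x) := by
    intro s f
    induction s using Finset.induction_on with
    | empty => simpa using hDy0
    | insert a s hx ih => rw [Finset.sum_insert hx, hDyadd, ih, Finset.sum_insert hx]
  rw [hDysum]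
  refine Finset.sum_congr rfl fun i _ => ?_
  rw [hDysum']
  have hterm : ∀ j : ℕ,
      Dy (C (η (pderiv (i, j) u)) * X (i, j))
        = C (dF (η (pderiv (i, j) u))) * X (i, j)
            + C (η (pderiv (i, j) u)) * X (i, j + 1) := by
    intro j
    rw [hDyleib, hDyC, hDyX]
  simp only [hterm, hcoeff, map_add, add_mul, apply_ite C, map_zero, ite_mul, zero_mul]
  rw [Finset.sum_add_distrib, Finset.sum_add_distrib]
  congr 1
  rw [Finset.sum_range_succ' (fun j => if j = 0 then 0
        else (C (η (pderiv (i, j - 1) u)) * X (i, j) : MvPolynomial (Fin n × ℕ) F)) (r + 1)]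
  rw [Finset.sum_range_succ]
  have hlast : η (pderiv (i, r + 1) u) = 0 := by
    rw [hord i (r + 1) (by omega), hη0]
  simp [hlast]
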